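/- There exists a unique β ∈ ℝ such that Σ_{i ∈ I} 1/(r_i e^{−βω_i} + 1) = |I| − 1, and this β satisfies β ≥ 0. -/
import Mathlib


/-- Let `I` be a finite set with `|I| ≥ 2`, and for each `i ∈ I` let
`ω i > 0` and `r i ≥ 1` be real numbers.  Then there exists a unique `β ∈ ℝ` such that
`∑ i, 1 / (r i * e^{-β * ω i} + 1) = |I| - 1`, and this `β` satisfies `β ≥ 0`. -/
theorem stmt_7 {I : Type*} [Fintype I] (hI : 2 ≤ Fintype.card I)
    (ω r : I → ℝ) (hω : ∀ i, 0 < ω i) (hr : ∀ i, 1 ≤ r i) :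
    (∃! β : ℝ, ∑ i, 1 / (r i * Real.exp (-β * ω i) + 1) = (Fintype.card I : ℝ) - 1) ∧
    (∀ β : ℝ, (∑ i, 1 / (r i * Real.exp (-β * ω i) + 1) = (Fintype.card I : ℝ) - 1) →
      0 ≤ β) := by
  have hne : Nonempty I := Fintype.card_pos_iff.mp (by omega)
  set n : ℝ := (Fintype.card I : ℝ) with hn
  have hn2 : (2 : ℝ) ≤ n := by rw [hn]; exact_mod_cast hI
  set f : ℝ → ℝ := fun β => ∑ i, 1 / (r i * Real.exp (-β * ω i) + 1) with hf
  have hri : ∀ i, (0 : ℝ) < r i := fun i => lt_of_lt_of_le one_pos (hr i)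
  have hden : ∀ β (i : I), 0 < r i * Real.exp (-β * ω i) + 1 := by
    intro β i
    have := mul_pos (hri i) (Real.exp_pos (-β * ω i))
    linarith
  -- strict monotonicity
  have hmono : StrictMono f := by
    intro a b hab
    apply Finset.sum_lt_sum_of_nonempty Finset.univ_nonempty
    intro i _
    have hlt : r i * Real.exp (-b * ω i) + 1 < r i * Real.exp (-a * ω i) + 1 := by
      have : Real.exp (-b * ω i) < Real.exp (-a * ω i) := by
        apply Real.exp_lt_exp.mpr
        nlinarith [hω i]
      nlinarith [hri i]
    exact one_div_lt_one_div_of_lt (hden b i) hlt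
  -- continuity
  have hcont : Continuous f := by
    apply continuous_finset_sum
    intro i _
    exact continuous_const.div
      (by continuity) (fun x => ne_of_gt (hden x i))
  -- f 0 ≤ n - 1
  have hf0 : f 0 ≤ n - 1 := by
    have : f 0 ≤ ∑ _i : I, (1 / 2 : ℝ) := by
      apply Finset.sum_le_sum
      intro i _
      have : (2 : ℝ) ≤ r i * Real.exp (-0 * ω i) + 1 := by
        simp [Real.exp_zero]
        linarith [hr i]
      rw [div_le_div_iff₀ (hden 0 i) (by norm_num)]
      linarith
    simp only [Finset.sum_const, Finset.card_univ, nsmul_eq_mul] at this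
    rw [hn]
    nlinarith
  -- f tends to n at infinity
  have htend : Filter.Tendsto f Filter.atTop (nhds n) := by
    have key : ∀ i : I, Filter.Tendsto (fun β : ℝ => 1 / (r i * Real.exp (-β * ω i) + 1))
        Filter.atTop (nhds 1) := by
      intro i
      have ht : Filter.Tendsto (fun β : ℝ => β * ω i) Filter.atTop Filter.atTop :=
        Filter.tendsto_id.atTop_mul_const (hω i)
      have h1 : Filter.Tendsto (fun β : ℝ => -β * ω i) Filter.atTop Filter.atBot := by
        exact (Filter.tendsto_neg_atTop_atBot.comp ht).congr fun β => by
          simp [neg_mul, Function.comp]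
      have h2 : Filter.Tendsto (fun β : ℝ => r i * Real.exp (-β * ω i) + 1)
          Filter.atTop (nhds 1) := by
        have := ((Real.tendsto_exp_atBot.comp h1).const_mul (r i)).add_const 1
        simpa using this
      simpa [one_div] using h2.inv₀ one_ne_zero
    have hsum := tendsto_finset_sum Finset.univ (fun i (_ : i ∈ Finset.univ) => key i)
    have hval : (∑ _i : I, (1 : ℝ)) = n := by simp [hn]
    rw [hval] at hsum
    exact hsum
  -- find b ≥ 0 with n - 1 ≤ f b
  obtain ⟨b, hb⟩ : ∃ b : ℝ, 0 ≤ b ∧ n - 1 ≤ f b := by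
    have : ∀ᶠ β in Filter.atTop, n - 1 ≤ f β :=
      htend.eventually (eventually_ge_nhds (by linarith : n - 1 < n))
    obtain ⟨b, hb⟩ := (this.and (Filter.eventually_ge_atTop 0)).exists
    exact ⟨b, hb.2, hb.1⟩
  -- existence by IVT on [0, b]
  obtain ⟨β₀, _, hβ₀⟩ := intermediate_value_Icc hb.1 hcont.continuousOn
    (Set.mem_Icc.mpr ⟨hf0, hb.2⟩)
  constructor
  · exact ⟨β₀, hβ₀, fun y hy => hmono.injective (hy.trans hβ₀.symm)⟩
  · intro β hβ
    by_contra h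
    push_neg at h
    have : f β < f 0 := hmono h
    have : f β = n - 1 := hβ
    linarith [hf0, hmono h]
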